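/- Let u : ℝ² → ℝ be continuous and κ ∈ ℝ. Suppose there are a measurable function U : ℝ → [0,∞) and a constant q < 1/2 with |u(x₁,x₂)| ≤ U(x₂) for all (x₁,x₂) and ∫₀^∞ U(x₂ + s) ds ≤ q for all x₂ ∈ ℝ. Then every bounded continuous solution ξ of the dual modified Jost integral equation at spectral parameter k = iκ satisfies ξ(x₁,x₂) > 0 for all (x₁,x₂) ∈ ℝ². -/

import Mathlib

open MeasureTheory Filter Set


lemma jost_key_bound (u : ℝ × ℝ → ℝ) (κ : ℝ) (U : ℝ → ℝ) (hUmeas : Measurable U)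
    (hUnn : ∀ t, 0 ≤ U t) (q : ℝ)
    (hbound : ∀ x₁ x₂ : ℝ, |u (x₁, x₂)| ≤ U x₂)
    (hUint : ∀ x₂ : ℝ, IntegrableOn (fun s => U (x₂ + s)) (Set.Ioi (0 : ℝ)))
    (hUq : ∀ x₂ : ℝ, (∫ s in Set.Ioi (0 : ℝ), U (x₂ + s)) ≤ q)
    (ξ : ℝ × ℝ → ℝ) (C : ℝ) (hC : 0 ≤ C) (hξC : ∀ p, |ξ p| ≤ C)
    (x₁ x₂ : ℝ) :
    |∫ y in {y : ℝ × ℝ | x₂ < y.2},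
        Real.exp (-(y.1 - x₁ + 2 * κ * (y.2 - x₂)) ^ 2 / (4 * (y.2 - x₂))) /
          Real.sqrt (y.2 - x₂) * u y * ξ y| ≤ 2 * Real.sqrt Real.pi * (q * C) := by
  have hq0 : 0 ≤ q :=
    le_trans (setIntegral_nonneg measurableSet_Ioi fun s _ => hUnn _) (hUq 0)
  set f : ℝ × ℝ → ℝ := fun y =>
    Real.exp (-(y.1 - x₁ + 2 * κ * (y.2 - x₂)) ^ 2 / (4 * (y.2 - x₂))) /
      Real.sqrt (y.2 - x₂) * u y * ξ y with hf
  set g : ℝ × ℝ → ENNReal := fun y =>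
    ENNReal.ofReal (Real.exp (-(y.1 - x₁ + 2 * κ * (y.2 - x₂)) ^ 2 / (4 * (y.2 - x₂))) /
      Real.sqrt (y.2 - x₂) * (U y.2 * C)) with hg
  have hgmeas : Measurable g := by
    apply Measurable.ennreal_ofReal
    apply Measurable.mul
    · apply Measurable.div
      · exact Real.measurable_exp.comp
          ((((measurable_fst.sub measurable_const).add
            ((measurable_const.mul (measurable_snd.sub measurable_const)))).pow_const 2).neg.div
            (measurable_const.mul (measurable_snd.sub measurable_const)))
      · exact Real.continuous_sqrt.measurable.comp (measurable_snd.sub measurable_const)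
    · exact (hUmeas.comp measurable_snd).mul_const C
  have hSmeas : MeasurableSet {y : ℝ × ℝ | x₂ < y.2} :=
    measurableSet_lt measurable_const measurable_snd
  -- pointwise bound
  have hpt : ∀ y ∈ {y : ℝ × ℝ | x₂ < y.2}, ENNReal.ofReal ‖f y‖ ≤ g y := by
    intro y _
    apply ENNReal.ofReal_le_ofReal
    have he : 0 ≤ Real.exp (-(y.1 - x₁ + 2 * κ * (y.2 - x₂)) ^ 2 / (4 * (y.2 - x₂))) /
        Real.sqrt (y.2 - x₂) := div_nonneg (Real.exp_pos _).le (Real.sqrt_nonneg _)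
    have hby : |u y| ≤ U y.2 := by simpa using hbound y.1 y.2
    calc ‖f y‖ = Real.exp (-(y.1 - x₁ + 2 * κ * (y.2 - x₂)) ^ 2 / (4 * (y.2 - x₂))) /
          Real.sqrt (y.2 - x₂) * |u y| * |ξ y| := by
            rw [hf]; simp only [Real.norm_eq_abs]; rw [abs_mul, abs_mul, abs_of_nonneg he]
      _ ≤ Real.exp (-(y.1 - x₁ + 2 * κ * (y.2 - x₂)) ^ 2 / (4 * (y.2 - x₂))) /
          Real.sqrt (y.2 - x₂) * (U y.2) * C := by
            exact mul_le_mul (mul_le_mul_of_nonneg_left hby he) (hξC y) (abs_nonneg _)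
              (mul_nonneg he (hUnn _))
      _ = Real.exp (-(y.1 - x₁ + 2 * κ * (y.2 - x₂)) ^ 2 / (4 * (y.2 - x₂))) /
          Real.sqrt (y.2 - x₂) * (U y.2 * C) := by ring
  -- compute the lintegral of g
  have hSeq : {y : ℝ × ℝ | x₂ < y.2} = (Set.univ : Set ℝ) ×ˢ Set.Ioi x₂ := by
    ext ⟨a, b⟩; simp
  have hginner : ∀ b ∈ Set.Ioi x₂,
      (∫⁻ a : ℝ, g (a, b)) = ENNReal.ofReal (2 * Real.sqrt Real.pi * (U b * C)) := by
    intro b hb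
    have ht : 0 < b - x₂ := sub_pos.mpr hb
    have hst : 0 < Real.sqrt (b - x₂) := Real.sqrt_pos.mpr ht
    set t := b - x₂ with htdef
    have hrw : ∀ a : ℝ,
        Real.exp (-(a - x₁ + 2 * κ * (b - x₂)) ^ 2 / (4 * (b - x₂))) /
          Real.sqrt (b - x₂) * (U b * C)
        = Real.exp (-(1 / (4 * t)) * (a + (2 * κ * t - x₁)) ^ 2)
            * (U b * C / Real.sqrt t) := by
      intro a
      rw [show -(a - x₁ + 2 * κ * (b - x₂)) ^ 2 / (4 * (b - x₂))
          = -(1 / (4 * t)) * (a + (2 * κ * t - x₁)) ^ 2 by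
        rw [← htdef]; field_simp; ring]
      ring
    have hint2 : Integrable (fun a : ℝ =>
        Real.exp (-(1 / (4 * t)) * (a + (2 * κ * t - x₁)) ^ 2)) :=
      (integrable_exp_neg_mul_sq (by positivity)).comp_add_right _
    have hgauss : (∫ a : ℝ, Real.exp (-(1 / (4 * t)) * (a + (2 * κ * t - x₁)) ^ 2))
        = Real.sqrt (Real.pi / (1 / (4 * t))) := by
      rw [show (fun a : ℝ => Real.exp (-(1 / (4 * t)) * (a + (2 * κ * t - x₁)) ^ 2))
          = fun a : ℝ => (fun x : ℝ => Real.exp (-(1 / (4 * t)) * x ^ 2)) (a + (2 * κ * t - x₁))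
          from rfl]
      rw [integral_add_right_eq_self (fun x : ℝ => Real.exp (-(1 / (4 * t)) * x ^ 2))]
      exact integral_gaussian _
    calc (∫⁻ a : ℝ, g (a, b))
        = ∫⁻ a : ℝ, ENNReal.ofReal (Real.exp (-(1 / (4 * t)) * (a + (2 * κ * t - x₁)) ^ 2)
            * (U b * C / Real.sqrt t)) := by
          refine lintegral_congr fun a => ?_
          rw [hg]; simp only; rw [hrw a]
      _ = ENNReal.ofReal (∫ a : ℝ, Real.exp (-(1 / (4 * t)) * (a + (2 * κ * t - x₁)) ^ 2)
            * (U b * C / Real.sqrt t)) := by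
          refine (ofReal_integral_eq_lintegral_ofReal (hint2.mul_const _)
            (ae_of_all _ fun a => ?_)).symm
          exact mul_nonneg (Real.exp_pos _).le
            (div_nonneg (mul_nonneg (hUnn b) hC) (Real.sqrt_nonneg _))
      _ = ENNReal.ofReal (2 * Real.sqrt Real.pi * (U b * C)) := by
          rw [integral_mul_const, hgauss]
          congr 1
          have h1 : Real.pi / (1 / (4 * t)) = (4 * t) * Real.pi := by
            field_simp
          have h2 : Real.sqrt ((4 * t) * Real.pi)
              = 2 * Real.sqrt t * Real.sqrt Real.pi := by
            rw [Real.sqrt_mul (by positivity), Real.sqrt_mul (by norm_num : (0:ℝ) ≤ 4),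
              show Real.sqrt 4 = 2 by
                rw [show (4:ℝ) = 2 ^ 2 by norm_num, Real.sqrt_sq (by norm_num)]]
          rw [h1, h2]
          field_simp
  have hUshift : (∫⁻ b in Set.Ioi x₂, ENNReal.ofReal (U b)) ≤ ENNReal.ofReal q := by
    have hmp : Measure.map (fun s : ℝ => x₂ + s) volume = volume :=
      map_add_left_eq_self volume x₂
    have : (∫⁻ b in Set.Ioi x₂, ENNReal.ofReal (U b))
        = ∫⁻ s in Set.Ioi (0:ℝ), ENNReal.ofReal (U (x₂ + s)) := by
      conv_lhs => rw [← hmp]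
      rw [setLIntegral_map measurableSet_Ioi hUmeas.ennreal_ofReal (measurable_const_add x₂)]
      congr 1
      ext s; simp
    rw [this, ← ofReal_integral_eq_lintegral_ofReal (hUint x₂)
      (ae_of_all _ fun s => hUnn _)]
    exact ENNReal.ofReal_le_ofReal (hUq x₂)
  have key : (∫⁻ y in {y : ℝ × ℝ | x₂ < y.2}, ENNReal.ofReal ‖f y‖)
      ≤ ENNReal.ofReal (2 * Real.sqrt Real.pi * (q * C)) := by
    calc (∫⁻ y in {y : ℝ × ℝ | x₂ < y.2}, ENNReal.ofReal ‖f y‖)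
        ≤ ∫⁻ y in {y : ℝ × ℝ | x₂ < y.2}, g y := setLIntegral_mono hgmeas hpt
      _ = ∫⁻ b in Set.Ioi x₂, ∫⁻ a : ℝ, g (a, b) := by
          rw [hSeq, show (volume : Measure (ℝ × ℝ)).restrict ((Set.univ : Set ℝ) ×ˢ Set.Ioi x₂)
            = (volume : Measure ℝ).prod ((volume : Measure ℝ).restrict (Set.Ioi x₂)) by
              rw [Measure.volume_eq_prod, ← Measure.prod_restrict, Measure.restrict_univ]]
          exact lintegral_prod_symm g hgmeas.aemeasurable
      _ = ∫⁻ b in Set.Ioi x₂, ENNReal.ofReal (2 * Real.sqrt Real.pi * C) * ENNReal.ofReal (U b) := by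
          refine setLIntegral_congr_fun measurableSet_Ioi (fun b hb => ?_)
          rw [hginner b hb, ← ENNReal.ofReal_mul (by positivity)]
          ring_nf
      _ = ENNReal.ofReal (2 * Real.sqrt Real.pi * C) * ∫⁻ b in Set.Ioi x₂, ENNReal.ofReal (U b) := by
          rw [lintegral_const_mul _ hUmeas.ennreal_ofReal]
      _ ≤ ENNReal.ofReal (2 * Real.sqrt Real.pi * C) * ENNReal.ofReal q := by
          gcongr
      _ = ENNReal.ofReal (2 * Real.sqrt Real.pi * (q * C)) := by
          rw [← ENNReal.ofReal_mul (by positivity)]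
          ring_nf
  calc |∫ y in {y : ℝ × ℝ | x₂ < y.2}, f y|
      ≤ (∫⁻ y in {y : ℝ × ℝ | x₂ < y.2}, ENNReal.ofReal ‖f y‖).toReal :=
        norm_integral_le_lintegral_norm f
    _ ≤ 2 * Real.sqrt Real.pi * (q * C) :=
        ENNReal.toReal_le_of_le_ofReal
          (mul_nonneg (mul_nonneg (by norm_num) (Real.sqrt_nonneg _)) (mul_nonneg hq0 hC)) key

/-- Let `u : ℝ² → ℝ` be continuous and `κ ∈ ℝ`. Suppose there are a
measurable function `U : ℝ → [0,∞)` and a constant `q < 1/2` with `|u(x₁,x₂)| ≤ U x₂`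
for all `(x₁,x₂)` and `∫₀^∞ U (x₂ + s) ds ≤ q` for all `x₂`. Then every bounded continuous
solution `ξ` of the dual modified Jost integral equation at spectral parameter `k = iκ`
satisfies `ξ x > 0` everywhere. -/
theorem dual_jost_solution_positive
    (u : ℝ × ℝ → ℝ) (hu : Continuous u) (κ : ℝ)
    (U : ℝ → ℝ) (hUmeas : Measurable U) (hUnn : ∀ t, 0 ≤ U t)
    (q : ℝ) (hq : q < 1 / 2)
    (hbound : ∀ x₁ x₂ : ℝ, |u (x₁, x₂)| ≤ U x₂)
    (hUint : ∀ x₂ : ℝ, IntegrableOn (fun s => U (x₂ + s)) (Set.Ioi (0 : ℝ)))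
    (hUq : ∀ x₂ : ℝ, (∫ s in Set.Ioi (0 : ℝ), U (x₂ + s)) ≤ q)
    (ξ : ℝ × ℝ → ℝ) (hξcont : Continuous ξ) (M : ℝ) (hξbdd : ∀ p : ℝ × ℝ, |ξ p| ≤ M)
    (hint : ∀ x₁ x₂ : ℝ, IntegrableOn
      (fun y : ℝ × ℝ =>
        Real.exp (-(y.1 - x₁ + 2 * κ * (y.2 - x₂)) ^ 2 / (4 * (y.2 - x₂))) /
          Real.sqrt (y.2 - x₂) * u y * ξ y)
      {y : ℝ × ℝ | x₂ < y.2})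
    (heq : ∀ x₁ x₂ : ℝ, ξ (x₁, x₂) =
      1 - (1 / (2 * Real.sqrt Real.pi)) *
        ∫ y in {y : ℝ × ℝ | x₂ < y.2},
          Real.exp (-(y.1 - x₁ + 2 * κ * (y.2 - x₂)) ^ 2 / (4 * (y.2 - x₂))) /
            Real.sqrt (y.2 - x₂) * u y * ξ y) :
    ∀ x : ℝ × ℝ, 0 < ξ x := by
  have hq0 : 0 ≤ q :=
    le_trans (setIntegral_nonneg measurableSet_Ioi fun s _ => hUnn _) (hUq 0)
  have hsp : 0 < Real.sqrt Real.pi := Real.sqrt_pos.mpr Real.pi_pos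
  have hM0 : 0 ≤ M := le_trans (abs_nonneg _) (hξbdd (0, 0))
  have h1q : 0 < 1 - q := by linarith
  set L : ℝ := 1 / (1 - q) with hL
  have hLpos : 0 < L := div_pos one_pos h1q
  have hL1 : 1 + q * L = L := by
    rw [hL]; field_simp; ring
  set D : ℝ := max M L - L with hD
  have hD0 : 0 ≤ D := sub_nonneg.mpr (le_max_right _ _)
  -- one iteration of the bound
  have step : ∀ C : ℝ, 0 ≤ C → (∀ p, |ξ p| ≤ C) → ∀ p : ℝ × ℝ, |ξ p| ≤ 1 + q * C := by
    intro C hC hξC p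
    obtain ⟨p₁, p₂⟩ := p
    rw [heq p₁ p₂]
    have hkb := jost_key_bound u κ U hUmeas hUnn q hbound hUint hUq ξ C hC hξC p₁ p₂
    set J := ∫ y in {y : ℝ × ℝ | p₂ < y.2},
      Real.exp (-(y.1 - p₁ + 2 * κ * (y.2 - p₂)) ^ 2 / (4 * (y.2 - p₂))) /
        Real.sqrt (y.2 - p₂) * u y * ξ y with hJ
    have h2 : |1 / (2 * Real.sqrt Real.pi) * J| ≤ q * C := by
      rw [abs_mul, abs_of_nonneg (by positivity : (0:ℝ) ≤ 1 / (2 * Real.sqrt Real.pi))]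
      calc 1 / (2 * Real.sqrt Real.pi) * |J|
          ≤ 1 / (2 * Real.sqrt Real.pi) * (2 * Real.sqrt Real.pi * (q * C)) :=
            mul_le_mul_of_nonneg_left hkb (by positivity)
        _ = q * C := by field_simp
    calc |1 - 1 / (2 * Real.sqrt Real.pi) * J|
        ≤ |1| + |1 / (2 * Real.sqrt Real.pi) * J| := by
          have := abs_add_le (1 : ℝ) (-(1 / (2 * Real.sqrt Real.pi) * J))
          simpa [sub_eq_add_neg] using this
      _ ≤ 1 + q * C := by rw [abs_one]; linarith
  -- iterate
  have bnd : ∀ n : ℕ, ∀ p : ℝ × ℝ, |ξ p| ≤ L + q ^ n * D := by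
    intro n
    induction n with
    | zero =>
      intro p
      calc |ξ p| ≤ M := hξbdd p
        _ ≤ max M L := le_max_left _ _
        _ = L + q ^ 0 * D := by rw [pow_zero, one_mul, hD]; ring
    | succ n ih =>
      have hCn : 0 ≤ L + q ^ n * D :=
        add_nonneg hLpos.le (mul_nonneg (pow_nonneg hq0 n) hD0)
      intro p
      calc |ξ p| ≤ 1 + q * (L + q ^ n * D) := step _ hCn ih p
        _ = (1 + q * L) + q ^ (n + 1) * D := by ring
        _ = L + q ^ (n + 1) * D := by rw [hL1]
  -- pass to the limit
  have hlim : ∀ p : ℝ × ℝ, |ξ p| ≤ L := by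
    intro p
    have ht : Tendsto (fun n : ℕ => L + q ^ n * D) atTop (nhds (L + 0 * D)) :=
      tendsto_const_nhds.add
        ((tendsto_pow_atTop_nhds_zero_of_lt_one hq0 (by linarith)).mul_const D)
    have := ge_of_tendsto' ht fun n => bnd n p
    simpa using this
  -- conclude positivity
  intro x
  obtain ⟨x₁, x₂⟩ := x
  rw [heq x₁ x₂]
  have hkb := jost_key_bound u κ U hUmeas hUnn q hbound hUint hUq ξ L hLpos.le hlim x₁ x₂
  set J := ∫ y in {y : ℝ × ℝ | x₂ < y.2},
    Real.exp (-(y.1 - x₁ + 2 * κ * (y.2 - x₂)) ^ 2 / (4 * (y.2 - x₂))) /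
      Real.sqrt (y.2 - x₂) * u y * ξ y with hJ
  have h2 : |1 / (2 * Real.sqrt Real.pi) * J| ≤ q * L := by
    rw [abs_mul, abs_of_nonneg (by positivity : (0:ℝ) ≤ 1 / (2 * Real.sqrt Real.pi))]
    calc 1 / (2 * Real.sqrt Real.pi) * |J|
        ≤ 1 / (2 * Real.sqrt Real.pi) * (2 * Real.sqrt Real.pi * (q * L)) :=
          mul_le_mul_of_nonneg_left hkb (by positivity)
      _ = q * L := by field_simp
  have h3 : q * L < 1 := by
    rw [hL, mul_one_div, div_lt_one h1q]
    linarith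
  have h4 : 1 / (2 * Real.sqrt Real.pi) * J ≤ |1 / (2 * Real.sqrt Real.pi) * J| :=
    le_abs_self _
  linarith
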